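/- Let G be a weighted directed graph with no negative cycle and let φ(v) = d(V,v) be Johnson's potentials (so w_φ ≥ 0). Build H from two copies G₁ (original weights w) and G₂ (weights w_φ), with edges v₁ → v₂ of weight φ_max − φ(v) and v₂ → v₁ of weight φ(v) − φ_max for each v, where φ_max = max_v φ(v). Then for all s,t: (a) every s₁ → t₁ path in H using at most one negative edge has weight at least d_G(s,t); (b) for every s–t path P in G there is an s₁ → t₁ path in H of weight w(P) with at most one negative edge. Hence d_H^1(s₁,t₁) = d_G(s,t). -/

import Mathlib

open Sum

/-- The weight of a walk (given as a list of vertices) under edge weights `w`. -/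
noncomputable def pathWeight {W : Type*} (w : W → W → ℝ) : List W → ℝ
  | [] => 0
  | [_] => 0
  | u :: v :: rest => w u v + pathWeight w (v :: rest)

/-- The number of negative edges along a walk. -/
noncomputable def negCount {W : Type*} (w : W → W → ℝ) (p : List W) : ℕ :=
  (p.zip p.tail).countP (fun e => decide (w e.1 e.2 < 0))

/-- Edges of the two-copy graph `H`: `inl` is the copy `G₁` with original
weights, `inr` is the copy `G₂` with Johnson-reweighted weights, and each
vertex `v` has crossing edges `v₁ → v₂` and `v₂ → v₁`. -/
def E2 {V : Type*} (E : V → V → Prop) : V ⊕ V → V ⊕ V → Prop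
  | inl u, inl v => E u v
  | inr u, inr v => E u v
  | inl u, inr v => u = v
  | inr u, inl v => u = v

/-- Weights of the two-copy graph `H`: `G₁` keeps `w`, `G₂` carries
`w_φ(u,v) = w u v + φ u − φ v`, and the crossing edges `v₁ → v₂`, `v₂ → v₁`
have weights `φmax − φ v` and `φ v − φmax`. -/
noncomputable def w2 {V : Type*} (w : V → V → ℝ) (φ : V → ℝ) (φmax : ℝ) :
    V ⊕ V → V ⊕ V → ℝ
  | inl u, inl v => w u v
  | inr u, inr v => w u v + φ u - φ v
  | inl u, inr _ => φmax - φ u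
  | inr u, inl _ => φ u - φmax

lemma pathWeight_cons_cons {W : Type*} (w : W → W → ℝ) (x y : W) (l : List W) :
    pathWeight w (x :: y :: l) = w x y + pathWeight w (y :: l) := rfl

lemma negCount_cons_cons {W : Type*} (w : W → W → ℝ) (x y : W) (l : List W) :
    negCount w (x :: y :: l) = negCount w (y :: l) + (if w x y < 0 then 1 else 0) := by
  simp [negCount, List.countP_cons]

/-- Part (a) core: potential lower bound along any `E2`-chain ending at `inl t`. -/
lemma partA_aux {V : Type*}
    (E : V → V → Prop) (w : V → V → ℝ) (φ : V → ℝ) (φmax : ℝ)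
    (d : V → V → ℝ)
    (hrefl : ∀ v, d v v = 0)
    (hdtri : ∀ u v t : V, E u v → d u t ≤ w u v + d v t) (t : V) :
    ∀ p : List (V ⊕ V), List.Chain' (E2 E) p →
      p.getLast? = some (inl t) → ∀ x, p.head? = some x →
      Sum.elim (fun v => d v t) (fun v => d v t + φ v - φmax) x
        ≤ pathWeight (w2 w φ φmax) p := by
  intro p
  induction p with
  | nil => intro _ h; simp at h
  | cons a p ih =>
    intro hc hl x hx
    simp only [List.head?_cons, Option.some_inj] at hx
    subst hx
    cases p with
    | nil =>
      simp only [List.getLast?_singleton, Option.some_inj] at hl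
      subst hl
      simp [pathWeight, hrefl]
    | cons b l =>
      unfold List.Chain' at hc
      rw [List.isChain_cons_cons] at hc
      rw [List.getLast?_cons_cons] at hl
      have hIH := ih hc.2 hl b (by simp)
      have hedge : Sum.elim (fun v => d v t) (fun v => d v t + φ v - φmax) a
          ≤ w2 w φ φmax a b
            + Sum.elim (fun v => d v t) (fun v => d v t + φ v - φmax) b := by
        obtain ⟨hab, -⟩ := hc
        rcases a with u | u <;> rcases b with v | v <;>
          simp only [Sum.elim_inl, Sum.elim_inr]
        · have h1 : E u v := hab
          have h2 : w2 w φ φmax (inl u) (inl v) = w u v := rfl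
          have := hdtri u v t h1; linarith
        · have h1 : u = v := hab
          subst h1
          have h2 : w2 w φ φmax (inl u) (inr u) = φmax - φ u := rfl
          linarith
        · have h1 : u = v := hab
          subst h1
          have h2 : w2 w φ φmax (inr u) (inl u) = φ u - φmax := rfl
          linarith
        · have h1 : E u v := hab
          have h2 : w2 w φ φmax (inr u) (inr v) = w u v + φ u - φ v := rfl
          have := hdtri u v t h1; linarith
      rw [pathWeight_cons_cons]
      linarith
/-- Part (b) core: the image of a `G`-path inside `G₂`, followed by the
crossing edge back to `G₁`. -/
lemma partB_aux {V : Type*}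
    (E : V → V → Prop) (w : V → V → ℝ) (φ : V → ℝ) (φmax : ℝ)
    (hvalid : ∀ u v, E u v → 0 ≤ w u v + φ u - φ v) (t : V) :
    ∀ p : List V, ∀ s, List.Chain' E p →
      p.head? = some s → p.getLast? = some t →
      List.Chain' (E2 E) (p.map inr ++ [inl t]) ∧
      (p.map inr ++ [inl t]).head? = some (inr s) ∧
      pathWeight (w2 w φ φmax) (p.map inr ++ [inl t])
        = pathWeight w p + φ s - φmax ∧
      negCount (w2 w φ φmax) (p.map inr ++ [inl t]) ≤ 1 := by
  intro p
  induction p with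
  | nil => intro s _ h; simp at h
  | cons a p ih =>
    intro s hc hh hl
    simp only [List.head?_cons, Option.some_inj] at hh
    subst hh
    cases p with
    | nil =>
      simp only [List.getLast?_singleton, Option.some_inj] at hl
      subst hl
      have hE : E2 E (inr a) (inl a) := rfl
      have hw : w2 w φ φmax (inr a) (inl a) = φ a - φmax := rfl
      refine ⟨List.isChain_pair.mpr hE, by simp, ?_, ?_⟩
      · simp only [List.map_cons, List.map_nil, List.nil_append, List.cons_append,
          pathWeight_cons_cons, hw]
        simp only [pathWeight]
        ring
      · rw [show ([a].map inr ++ [inl a] : List (V ⊕ V)) = [inr a, inl a] by simp]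
        rw [negCount_cons_cons]
        simp [negCount]
        split <;> simp
    | cons b l =>
      unfold List.Chain' at hc
      rw [List.isChain_cons_cons] at hc
      rw [List.getLast?_cons_cons] at hl
      obtain ⟨hch, hhd, hpw, hnc⟩ := ih b hc.2 (by simp) hl
      have hq : (a :: b :: l).map inr ++ [inl t]
          = inr a :: ((b :: l).map inr ++ [inl t]) := by simp
      rw [hq]
      have hhd' : ((b :: l).map inr ++ [inl t] : List (V ⊕ V))
          = inr b :: (l.map inr ++ [inl t]) := by simp
      refine ⟨?_, by simp, ?_, ?_⟩
      · rw [hhd']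
        unfold List.Chain'
        rw [List.isChain_cons_cons]
        exact ⟨hc.1, hhd' ▸ hch⟩
      · rw [hhd', pathWeight_cons_cons, ← hhd', hpw, pathWeight_cons_cons]
        have hw : w2 w φ φmax (inr a) (inr b) = w a b + φ a - φ b := rfl
        rw [hw]; ring
      · rw [hhd', negCount_cons_cons, ← hhd']
        have h0 : ¬ (w2 w φ φmax (inr a) (inr b) < 0) := by
          have hw : w2 w φ φmax (inr a) (inr b) = w a b + φ a - φ b := rfl
          rw [hw, not_lt]
          exact hvalid a b hc.1
        rw [if_neg h0]
        simpa using hnc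

/-- The naive hop reducer: with `φ` Johnson's potentials (valid reweighting)
and `d` the shortest-path distance of `G`, (a) every `s₁ → t₁` path in `H`
with at most one negative edge has weight at least `d s t`, and (b) every
`s → t` path of `G` induces an `s₁ → t₁` path in `H` of the same weight with
at most one negative edge.  Hence `d_H^1(s₁,t₁) = d_G(s,t)`. -/
theorem two_copy_hop_reducer {V : Type*}
    (E : V → V → Prop) (w : V → V → ℝ) (φ : V → ℝ) (φmax : ℝ)
    (hvalid : ∀ u v, E u v → 0 ≤ w u v + φ u - φ v)
    (hmax : ∀ v, φ v ≤ φmax) (hattain : ∃ v, φmax = φ v)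
    (d : V → V → ℝ)
    (hrefl : ∀ v, d v v = 0)
    (hdtri : ∀ u v t : V, E u v → d u t ≤ w u v + d v t) :
    ∀ s t : V,
      (∀ p : List (V ⊕ V), List.Chain' (E2 E) p →
        p.head? = some (inl s) → p.getLast? = some (inl t) →
        negCount (w2 w φ φmax) p ≤ 1 →
        d s t ≤ pathWeight (w2 w φ φmax) p) ∧
      (∀ p : List V, List.Chain' E p →
        p.head? = some s → p.getLast? = some t →
        ∃ q : List (V ⊕ V), List.Chain' (E2 E) q ∧
          q.head? = some (inl s) ∧ q.getLast? = some (inl t) ∧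
          negCount (w2 w φ φmax) q ≤ 1 ∧
          pathWeight (w2 w φ φmax) q = pathWeight w p) := by
  intro s t
  constructor
  · intro p hc hh hl _
    have := partA_aux E w φ φmax d hrefl hdtri t p hc hl (inl s) hh
    simpa using this
  · intro p hc hh hl
    obtain ⟨hch, hhd, hpw, hnc⟩ := partB_aux E w φ φmax hvalid t p s hc hh hl
    refine ⟨inl s :: (p.map inr ++ [inl t]), ?_, by simp, ?_, ?_, ?_⟩
    · unfold List.Chain'
      rw [List.isChain_cons]
      refine ⟨?_, hch⟩
      intro b hb
      rw [hhd] at hb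
      simp only [Option.mem_def, Option.some_inj] at hb
      subst hb
      exact rfl
    · rw [show (inl s :: (p.map inr ++ [inl t]) : List (V ⊕ V))
          = (inl s :: p.map inr) ++ [inl t] by simp]
      exact List.getLast?_concat
    · obtain ⟨q', hq'⟩ : ∃ q', p.map inr ++ [inl t] = inr s :: q' := by
        cases hq : (p.map inr ++ [inl t] : List (V ⊕ V)) with
        | nil => rw [hq] at hhd; simp at hhd
        | cons x q' =>
          rw [hq] at hhd
          simp only [List.head?_cons, Option.some_inj] at hhd
          exact ⟨q', by rw [hhd]⟩
      rw [hq', negCount_cons_cons, ← hq']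
      have h0 : ¬ (w2 w φ φmax (inl s) (inr s) < 0) := by
        have hw : w2 w φ φmax (inl s) (inr s) = φmax - φ s := rfl
        rw [hw, not_lt, sub_nonneg]
        exact hmax s
      rw [if_neg h0]
      simpa using hnc
    · obtain ⟨q', hq'⟩ : ∃ q', p.map inr ++ [inl t] = inr s :: q' := by
        cases hq : (p.map inr ++ [inl t] : List (V ⊕ V)) with
        | nil => rw [hq] at hhd; simp at hhd
        | cons x q' =>
          rw [hq] at hhd
          simp only [List.head?_cons, Option.some_inj] at hhd
          exact ⟨q', by rw [hhd]⟩
      rw [hq', pathWeight_cons_cons, ← hq', hpw]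
      have hw : w2 w φ φmax (inl s) (inr s) = φmax - φ s := rfl
      rw [hw]; ring
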